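/- For every horizon m ≥ 0 and every μ ∈ ℝ, the Gaussian one-armed-bandit value function is nonincreasing in the Bayesian number of observations: if 0 < ñ ≤ n then V_m(μ,n,γ,τ,λ) ≤ V_m(μ,ñ,γ,τ,λ). -/

import Mathlib

open MeasureTheory ProbabilityTheory Real
open scoped NNReal

/-- Finite-horizon value function of the Gaussian one-armed bandit:
`V γ τ m μ n λ`, with discount `γ`, observation precision `τ`, horizon `m`,
posterior state `(μ, n)` and safe-arm reward `λ`. The expectation over the
next observation is taken under the Gaussian predictive distribution
`𝒩(μ, 1/n + 1/τ)`. -/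
noncomputable def V (γ τ : ℝ) : ℕ → ℝ → ℝ → ℝ → ℝ
  | 0, μ, _n, lam => max (μ - lam) 0 / (1 - γ)
  | m + 1, μ, n, lam =>
      max (μ - lam + γ * ∫ y, V γ τ m ((n * μ + τ * y) / (n + τ)) (n + τ) lam
        ∂(gaussianReal μ (1 / n + 1 / τ).toNNReal)) 0

namespace NmabAux

lemma V_nonneg {γ τ : ℝ} (hγ1 : γ < 1) : ∀ (m : ℕ) (μ n lam : ℝ), 0 ≤ V γ τ m μ n lam
  | 0, μ, n, lam => div_nonneg (le_max_right _ _) (by linarith)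
  | (m+1), μ, n, lam => le_max_right _ _

/-- standard gaussian measure -/
noncomputable abbrev G : Measure ℝ := gaussianReal 0 1

lemma integrable_abs_G : Integrable (fun z : ℝ => |z|) G := by
  rw [G, gaussianReal_of_var_ne_zero 0 one_ne_zero,
    integrable_withDensity_iff (measurable_gaussianPDF 0 1)
      (ae_of_all _ fun x => ENNReal.ofReal_lt_top)]
  have h2 : Integrable (fun x : ℝ => |x * Real.exp (-(2⁻¹) * x^2)|) :=
    (integrable_mul_exp_neg_mul_sq (by norm_num : (0:ℝ) < 2⁻¹)).abs
  have := h2.const_mul ((Real.sqrt (2 * π * (1:ℝ≥0)))⁻¹)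
  refine this.congr (ae_of_all _ fun x => ?_)
  unfold gaussianPDF gaussianPDFReal
  simp only []
  rw [ENNReal.toReal_ofReal (by positivity)]
  rw [abs_mul, abs_of_pos (Real.exp_pos _)]
  push_cast
  ring_nf

lemma integrable_const_add_abs (c d : ℝ) : Integrable (fun z : ℝ => c + d * |z|) G :=
  (integrable_const c).add (integrable_abs_G.const_mul d)

lemma integrable_linear_growth {f : ℝ → ℝ} (hf : Continuous f) {A : ℝ}
    (hgrow : ∀ x, |f x| ≤ A * (1 + |x|)) (a k : ℝ) :
    Integrable (fun z : ℝ => f (a + k * z)) G := by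
  refine Integrable.mono' (integrable_const_add_abs (A * (1 + |a|)) (A * |k|))
    ((hf.comp (by fun_prop)).aestronglyMeasurable) (ae_of_all _ fun z => ?_)
  have h0 : 0 ≤ A := by
    have := (abs_nonneg (f 0)).trans (hgrow 0)
    nlinarith [abs_nonneg (0:ℝ)]
  calc ‖f (a + k * z)‖ = |f (a + k * z)| := rfl
    _ ≤ A * (1 + |a + k * z|) := hgrow _
    _ ≤ A * (1 + (|a| + |k| * |z|)) := by
        have : |a + k * z| ≤ |a| + |k| * |z| := by
          calc |a + k * z| ≤ |a| + |k * z| := abs_add_le _ _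
            _ = |a| + |k| * |z| := by rw [abs_mul]
        nlinarith
    _ = A * (1 + |a|) + A * |k| * |z| := by ring

lemma map_std (μ : ℝ) (v : ℝ≥0) :
    Measure.map (fun z => Real.sqrt v * z + μ) G = gaussianReal μ v := by
  have h1 : (fun z : ℝ => Real.sqrt v * z + μ) = (fun x => x + μ) ∘ (fun z => Real.sqrt v * z) := rfl
  rw [h1, ← Measure.map_map (by fun_prop) (by fun_prop)]
  rw [show (fun z : ℝ => Real.sqrt v * z) = ((Real.sqrt v) * ·) from rfl,
    gaussianReal_map_const_mul, gaussianReal_map_add_const]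
  congr 1
  · simp
  · ext
    simp [Real.sq_sqrt v.coe_nonneg]

lemma integral_gaussianReal_eq {f : ℝ → ℝ} (hf : Continuous f) (μ : ℝ) (v : ℝ≥0) :
    ∫ y, f y ∂(gaussianReal μ v) = ∫ z, f (Real.sqrt v * z + μ) ∂G := by
  rw [← map_std μ v, integral_map (by fun_prop) hf.aestronglyMeasurable]

lemma integral_comp_neg_G {f : ℝ → ℝ} (hf : Continuous f) :
    ∫ z, f (-z) ∂G = ∫ z, f z ∂G := by
  have hmap : Measure.map (((-1 : ℝ)) * ·) G = G := by
    rw [G, gaussianReal_map_const_mul]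
    norm_num
  conv_rhs => rw [← hmap, integral_map (by fun_prop) (by rw [hmap]; exact hf.aestronglyMeasurable)]
  simp

end NmabAux

namespace NmabAux2
open NmabAux

/-- Comparison of Gaussian integrals of a convex function for different scalings. -/
lemma gaussian_cmp {f : ℝ → ℝ} (hf : Continuous f) (hf0 : ∀ x, 0 ≤ f x)
    (hconv : ConvexOn ℝ Set.univ f) {A : ℝ}
    (hgrow : ∀ x, f x ≤ A * (1 + |x|)) (μ : ℝ) {a b : ℝ} (ha : 0 ≤ a) (hab : a ≤ b) :
    ∫ z, f (μ + a * z) ∂G ≤ ∫ z, f (μ + b * z) ∂G := by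
  have hgrow' : ∀ x, |f x| ≤ A * (1 + |x|) := fun x => by
    rw [abs_of_nonneg (hf0 x)]; exact hgrow x
  rcases eq_or_lt_of_le (ha.trans hab) with hb | hb
  · have : a = 0 := le_antisymm (hab.trans hb.symm.le) ha
    rw [this, ← hb]
  · set t : ℝ := (1 + a / b) / 2 with ht
    have habb : a / b ≤ 1 := (div_le_one hb).mpr hab
    have ht0 : 0 ≤ t := by positivity
    have ht1 : 1 - t = (1 - a / b) / 2 := by rw [ht]; ring
    have ht1' : 0 ≤ 1 - t := by rw [ht1]; linarith
    have int_b : Integrable (fun z => f (μ + b * z)) G := integrable_linear_growth hf hgrow' μ b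
    have int_nb : Integrable (fun z => f (μ - b * z)) G := by
      have := integrable_linear_growth hf hgrow' μ (-b)
      refine this.congr (ae_of_all _ fun z => ?_)
      ring_nf
    have int_a : Integrable (fun z => f (μ + a * z)) G := integrable_linear_growth hf hgrow' μ a
    have key : ∀ z : ℝ, f (μ + a * z) ≤ t * f (μ + b * z) + (1 - t) * f (μ - b * z) := by
      intro z
      have harg : t • (μ + b * z) + (1 - t) • (μ - b * z) = μ + a * z := by
        simp only [smul_eq_mul]
        rw [ht]
        field_simp
        ring
      have := hconv.2 (Set.mem_univ (μ + b * z)) (Set.mem_univ (μ - b * z)) ht0 ht1' (by ring)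
      rw [harg] at this
      simpa [smul_eq_mul] using this
    calc ∫ z, f (μ + a * z) ∂G
        ≤ ∫ z, (t * f (μ + b * z) + (1 - t) * f (μ - b * z)) ∂G :=
          integral_mono int_a ((int_b.const_mul t).add (int_nb.const_mul (1 - t)))
            (fun z => key z)
      _ = t * ∫ z, f (μ + b * z) ∂G + (1 - t) * ∫ z, f (μ - b * z) ∂G := by
          rw [integral_add (int_b.const_mul t) (int_nb.const_mul (1 - t)),
            integral_const_mul, integral_const_mul]
      _ = ∫ z, f (μ + b * z) ∂G := by
          have hsym : ∫ z, f (μ - b * z) ∂G = ∫ z, f (μ + b * z) ∂G := by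
            have := integral_comp_neg_G (f := fun z => f (μ + b * z)) (by fun_prop)
            rw [← this]
            congr 1 with z
            ring_nf
          rw [hsym]; ring

/-- affine reparametrization of the value recursion integral -/
lemma rep {τ n : ℝ} (hτ : 0 < τ) (hn : 0 < n) {f : ℝ → ℝ} (hf : Continuous f) (μ : ℝ) :
    ∫ y, f ((n * μ + τ * y) / (n + τ)) ∂(gaussianReal μ (1 / n + 1 / τ).toNNReal)
      = ∫ z, f (μ + (τ / (n + τ) * Real.sqrt (1 / n + 1 / τ)) * z) ∂G := by
  have hnτ : (0:ℝ) < n + τ := by linarith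
  have hv : ((1 / n + 1 / τ : ℝ).toNNReal : ℝ) = 1 / n + 1 / τ :=
    Real.coe_toNNReal _ (by positivity)
  rw [integral_gaussianReal_eq (by fun_prop) μ _]
  congr 1 with z
  rw [hv]
  congr 1
  field_simp
  ring

end NmabAux2

namespace NmabAux3
open NmabAux NmabAux2

theorem Vprops (γ τ lam : ℝ) (hγ0 : 0 ≤ γ) (hγ1 : γ < 1) (hτ : 0 < τ) : ∀ m : ℕ,
    (∀ n : ℝ, 0 < n → Continuous (fun μ => V γ τ m μ n lam)
        ∧ ConvexOn ℝ Set.univ (fun μ => V γ τ m μ n lam)) ∧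
    (∀ n₀ : ℝ, 0 < n₀ → ∃ A : ℝ, 0 ≤ A ∧
        ∀ μ n : ℝ, n₀ ≤ n → V γ τ m μ n lam ≤ A * (1 + |μ|)) := by
  intro m
  induction m with
  | zero =>
    constructor
    · intro n hn
      constructor
      · simp only [V]
        fun_prop
      · simp only [V]
        have h := ((((convexOn_id convex_univ).sub
            (concaveOn_const lam convex_univ)).sup (convexOn_const (0:ℝ) convex_univ)).smul
            (inv_nonneg.mpr (by linarith : (0:ℝ) ≤ 1 - γ)))
        exact h.congr (fun μ _ => by simp [div_eq_inv_mul, smul_eq_mul])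
    · intro n₀ hn₀
      refine ⟨(1 + |lam|) / (1 - γ), div_nonneg (by positivity) (by linarith), fun μ n _ => ?_⟩
      simp only [V]
      rw [div_le_iff₀ (by linarith : (0:ℝ) < 1 - γ)]
      have h1 : max (μ - lam) 0 ≤ |μ| + |lam| := by
        apply max_le
        · have := le_abs_self μ
          have := neg_abs_le lam
          linarith
        · positivity
      have h2 : (1 + |lam|) / (1 - γ) * (1 + |μ|) * (1 - γ) = (1 + |lam|) * (1 + |μ|) := by
        field_simp
        exact div_self (ne_of_gt (by linarith : (1:ℝ) - γ > 0))
      rw [h2]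
      nlinarith [abs_nonneg μ, abs_nonneg lam]
  | succ m ih =>
    obtain ⟨ihc, ihg⟩ := ih
    -- reparametrized form of V (m+1)
    have hrep : ∀ n : ℝ, 0 < n → ∀ μ : ℝ, V γ τ (m+1) μ n lam =
        max (μ - lam + γ * ∫ z, V γ τ m (μ + (τ / (n + τ) * Real.sqrt (1 / n + 1 / τ)) * z)
          (n + τ) lam ∂G) 0 := by
      intro n hn μ
      simp only [V]
      rw [rep hτ hn (ihc (n + τ) (by linarith)).1 μ]
    constructor
    · intro n hn
      have hnτ : (0:ℝ) < n + τ := by linarith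
      set k : ℝ := τ / (n + τ) * Real.sqrt (1 / n + 1 / τ) with hk
      obtain ⟨A, hA, hAb⟩ := ihg (n + τ) hnτ
      have hgrow' : ∀ x, |V γ τ m x (n + τ) lam| ≤ A * (1 + |x|) := fun x => by
        rw [abs_of_nonneg (V_nonneg hγ1 m x (n + τ) lam)]
        exact hAb x (n + τ) le_rfl
      have hcont := (ihc (n + τ) hnτ).1
      have hconvm := (ihc (n + τ) hnτ).2
      -- convexity of μ ↦ ∫ V m (μ + k z)
      have hJconv : ConvexOn ℝ Set.univ
          (fun μ => ∫ z, V γ τ m (μ + k * z) (n + τ) lam ∂G) := by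
        refine ⟨convex_univ, fun x _ y _ a b ha hb hab => ?_⟩
        simp only [smul_eq_mul]
        have intx : Integrable (fun z => V γ τ m (x + k * z) (n + τ) lam) G :=
          integrable_linear_growth hcont hgrow' x k
        have inty : Integrable (fun z => V γ τ m (y + k * z) (n + τ) lam) G :=
          integrable_linear_growth hcont hgrow' y k
        have intxy : Integrable (fun z => V γ τ m (a * x + b * y + k * z) (n + τ) lam) G :=
          integrable_linear_growth hcont hgrow' (a * x + b * y) k
        calc ∫ z, V γ τ m (a * x + b * y + k * z) (n + τ) lam ∂G
            ≤ ∫ z, (a * V γ τ m (x + k * z) (n + τ) lam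
                + b * V γ τ m (y + k * z) (n + τ) lam) ∂G := by
              refine integral_mono intxy ((intx.const_mul a).add (inty.const_mul b)) fun z => ?_
              have harg : a * x + b * y + k * z = a • (x + k * z) + b • (y + k * z) := by
                simp only [smul_eq_mul]; linear_combination (-(k * z)) * hab
              rw [harg]
              simpa [smul_eq_mul] using
                hconvm.2 (Set.mem_univ (x + k * z)) (Set.mem_univ (y + k * z)) ha hb hab
          _ = a * ∫ z, V γ τ m (x + k * z) (n + τ) lam ∂G
                + b * ∫ z, V γ τ m (y + k * z) (n + τ) lam ∂G := by
              rw [integral_add (intx.const_mul a) (inty.const_mul b),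
                integral_const_mul, integral_const_mul]
      have hgconv : ConvexOn ℝ Set.univ (fun μ : ℝ =>
          μ - lam + γ * ∫ z, V γ τ m (μ + k * z) (n + τ) lam ∂G) := by
        have h1 : ConvexOn ℝ Set.univ (fun μ : ℝ => μ - lam) :=
          (convexOn_id convex_univ).sub (concaveOn_const lam convex_univ)
        have h2 := hJconv.smul hγ0
        have h3 := h1.add h2
        exact h3
      have hVconv : ConvexOn ℝ Set.univ (fun μ => V γ τ (m+1) μ n lam) := by
        have h4 := hgconv.sup (convexOn_const (0:ℝ) convex_univ)
        exact h4.congr (fun μ _ => by rw [hrep n hn μ]; rfl)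
      refine ⟨?_, hVconv⟩
      exact continuousOn_univ.mp (hVconv.continuousOn isOpen_univ)
    · intro n₀ hn₀
      obtain ⟨A, hA, hAb⟩ := ihg (n₀ + τ) (by linarith)
      set M1 : ℝ := ∫ z, |z| ∂G with hM1
      have hM1nn : 0 ≤ M1 := integral_nonneg fun z => abs_nonneg z
      set K₀ : ℝ := Real.sqrt (1 / n₀ + 1 / τ) with hK₀
      have hK₀nn : 0 ≤ K₀ := Real.sqrt_nonneg _
      refine ⟨1 + |lam| + A * (1 + K₀ * M1),
        by nlinarith [abs_nonneg lam, mul_nonneg hA (by positivity : (0:ℝ) ≤ 1 + K₀ * M1)],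
        fun μ n hn => ?_⟩
      have hn' : (0:ℝ) < n := lt_of_lt_of_le hn₀ hn
      have hnτ : (0:ℝ) < n + τ := by linarith
      set k : ℝ := τ / (n + τ) * Real.sqrt (1 / n + 1 / τ) with hk
      have hknn : 0 ≤ k := by positivity
      have hkK : k ≤ K₀ := by
        rw [hk, hK₀]
        calc τ / (n + τ) * Real.sqrt (1 / n + 1 / τ)
            ≤ 1 * Real.sqrt (1 / n + 1 / τ) := by
              apply mul_le_mul_of_nonneg_right _ (Real.sqrt_nonneg _)
              rw [div_le_one hnτ]; linarith
          _ = Real.sqrt (1 / n + 1 / τ) := one_mul _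
          _ ≤ Real.sqrt (1 / n₀ + 1 / τ) := by
              apply Real.sqrt_le_sqrt
              have : 1 / n ≤ 1 / n₀ := one_div_le_one_div_of_le hn₀ hn
              linarith
      rw [hrep n hn' μ, ← hk]
      have hcont := (ihc (n + τ) hnτ).1
      have hgrow' : ∀ x, |V γ τ m x (n + τ) lam| ≤ A * (1 + |x|) := fun x => by
        rw [abs_of_nonneg (V_nonneg hγ1 m x (n + τ) lam)]
        exact hAb x (n + τ) (by linarith)
      have intJ : Integrable (fun z => V γ τ m (μ + k * z) (n + τ) lam) G :=
        integrable_linear_growth hcont hgrow' μ k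
      have hJle : (∫ z, V γ τ m (μ + k * z) (n + τ) lam ∂G)
          ≤ A * (1 + |μ|) + A * K₀ * M1 := by
        have hbd : ∀ z : ℝ, V γ τ m (μ + k * z) (n + τ) lam
            ≤ A * (1 + |μ|) + (A * K₀) * |z| := by
          intro z
          calc V γ τ m (μ + k * z) (n + τ) lam ≤ A * (1 + |μ + k * z|) :=
                hAb _ _ (by linarith)
            _ ≤ A * (1 + |μ|) + (A * K₀) * |z| := by
                have h1 : |μ + k * z| ≤ |μ| + k * |z| := by
                  calc |μ + k * z| ≤ |μ| + |k * z| := abs_add_le _ _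
                    _ = |μ| + k * |z| := by rw [abs_mul, abs_of_nonneg hknn]
                nlinarith [abs_nonneg z, mul_le_mul_of_nonneg_left h1 hA,
                  mul_le_mul_of_nonneg_left
                    (mul_le_mul_of_nonneg_right hkK (abs_nonneg z)) hA]
        calc (∫ z, V γ τ m (μ + k * z) (n + τ) lam ∂G)
            ≤ ∫ z, (A * (1 + |μ|) + (A * K₀) * |z|) ∂G :=
              integral_mono intJ (integrable_const_add_abs _ _) hbd
          _ = A * (1 + |μ|) + A * K₀ * M1 := by
              rw [integral_add (integrable_const _) (integrable_abs_G.const_mul _),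
                integral_const, integral_const_mul]
              simp [hM1]
      have hJnn : 0 ≤ ∫ z, V γ τ m (μ + k * z) (n + τ) lam ∂G :=
        integral_nonneg fun z => V_nonneg hγ1 m _ _ lam
      have hγJ : γ * (∫ z, V γ τ m (μ + k * z) (n + τ) lam ∂G)
          ≤ A * (1 + |μ|) + A * K₀ * M1 := by
        calc γ * (∫ z, V γ τ m (μ + k * z) (n + τ) lam ∂G)
            ≤ 1 * (∫ z, V γ τ m (μ + k * z) (n + τ) lam ∂G) :=
              mul_le_mul_of_nonneg_right (by linarith) hJnn
          _ = _ := one_mul _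
          _ ≤ _ := hJle
      apply max_le
      · have hμ : μ - lam ≤ |μ| + |lam| := by
          have := le_abs_self μ
          have := neg_abs_le lam
          linarith
        have h0 : 0 ≤ A * (1 + K₀ * M1) := mul_nonneg hA (by positivity)
        nlinarith [abs_nonneg μ, abs_nonneg lam, h0,
          mul_nonneg (add_nonneg (abs_nonneg lam) (by nlinarith [mul_nonneg hA (mul_nonneg hK₀nn hM1nn)] : (0:ℝ) ≤ A * K₀ * M1)) (abs_nonneg μ),
          mul_nonneg hA (abs_nonneg μ)]
      · have h0 : 0 ≤ A * (1 + K₀ * M1) := mul_nonneg hA (by positivity)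
        nlinarith [abs_nonneg μ, abs_nonneg lam, h0, mul_nonneg (add_nonneg (add_nonneg (by norm_num : (0:ℝ) ≤ 1) (abs_nonneg lam)) h0) (abs_nonneg μ)]

end NmabAux3


open NmabAux NmabAux2 NmabAux3

/-- For every horizon `m` and every `μ`, the Gaussian one-armed-bandit value
is nonincreasing in the Bayesian number of observations: if `0 < ñ ≤ n` then
`V_m(μ,n,γ,τ,λ) ≤ V_m(μ,ñ,γ,τ,λ)`. -/
theorem nmab_value_antitone_in_n (γ τ lam : ℝ)
    (hγ0 : 0 ≤ γ) (hγ1 : γ < 1) (hτ : 0 < τ) :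
    ∀ m : ℕ, ∀ μ nt n : ℝ, 0 < nt → nt ≤ n →
      V γ τ m μ n lam ≤ V γ τ m μ nt lam := by
  intro m
  induction m with
  | zero =>
    intro μ nt n hnt hle
    simp only [V]
    exact le_refl _
  | succ m ih =>
    intro μ nt n hnt hle
    have hn : 0 < n := lt_of_lt_of_le hnt hle
    obtain ⟨ihc, ihg⟩ := Vprops γ τ lam hγ0 hγ1 hτ m
    have hrep : ∀ n' : ℝ, 0 < n' → V γ τ (m+1) μ n' lam =
        max (μ - lam + γ * ∫ z, V γ τ m (μ + (τ / (n' + τ) * Real.sqrt (1 / n' + 1 / τ)) * z)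
          (n' + τ) lam ∂G) 0 := by
      intro n' hn'
      simp only [V]
      rw [rep hτ hn' (ihc (n' + τ) (by linarith)).1 μ]
    rw [hrep n hn, hrep nt hnt]
    set a : ℝ := τ / (n + τ) * Real.sqrt (1 / n + 1 / τ) with ha
    set b : ℝ := τ / (nt + τ) * Real.sqrt (1 / nt + 1 / τ) with hb
    have hntτ : (0:ℝ) < nt + τ := by linarith
    have hnτ : (0:ℝ) < n + τ := by linarith
    obtain ⟨A, hA, hAb⟩ := ihg (nt + τ) hntτ
    have hcontn := (ihc (n + τ) hnτ).1
    have hcontnt := (ihc (nt + τ) hntτ).1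
    have hgrow_n : ∀ x, |V γ τ m x (n + τ) lam| ≤ A * (1 + |x|) := fun x => by
      rw [abs_of_nonneg (V_nonneg hγ1 m x (n + τ) lam)]
      exact hAb x (n + τ) (by linarith)
    have hgrow_nt : ∀ x, |V γ τ m x (nt + τ) lam| ≤ A * (1 + |x|) := fun x => by
      rw [abs_of_nonneg (V_nonneg hγ1 m x (nt + τ) lam)]
      exact hAb x (nt + τ) le_rfl
    have ha0 : 0 ≤ a := by rw [ha]; positivity
    have hb0 : 0 ≤ b := by rw [hb]; positivity
    have hab : a ≤ b := by
      have hsqa : a ^ 2 = τ / (n * (n + τ)) := by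
        rw [ha, mul_pow, Real.sq_sqrt (by positivity)]
        field_simp
        ring
      have hsqb : b ^ 2 = τ / (nt * (nt + τ)) := by
        rw [hb, mul_pow, Real.sq_sqrt (by positivity)]
        field_simp
        ring
      have hsq : a ^ 2 ≤ b ^ 2 := by
        rw [hsqa, hsqb]
        have hden : nt * (nt + τ) ≤ n * (n + τ) := by nlinarith
        have hpos : (0:ℝ) < nt * (nt + τ) := by positivity
        exact div_le_div_of_nonneg_left hτ.le hpos hden
      calc a = Real.sqrt (a ^ 2) := (Real.sqrt_sq ha0).symm
        _ ≤ Real.sqrt (b ^ 2) := Real.sqrt_le_sqrt hsq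
        _ = b := Real.sqrt_sq hb0
    have step1 : (∫ z, V γ τ m (μ + a * z) (n + τ) lam ∂G)
        ≤ ∫ z, V γ τ m (μ + a * z) (nt + τ) lam ∂G := by
      refine integral_mono (integrable_linear_growth hcontn hgrow_n μ a)
        (integrable_linear_growth hcontnt hgrow_nt μ a) fun z => ?_
      exact ih _ (nt + τ) (n + τ) hntτ (by linarith)
    have step2 : (∫ z, V γ τ m (μ + a * z) (nt + τ) lam ∂G)
        ≤ ∫ z, V γ τ m (μ + b * z) (nt + τ) lam ∂G := by
      refine gaussian_cmp hcontnt (fun x => V_nonneg hγ1 m x (nt + τ) lam)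
        (ihc (nt + τ) hntτ).2 (fun x => hAb x (nt + τ) le_rfl) μ ha0 hab
    exact max_le_max (add_le_add_right
      (mul_le_mul_of_nonneg_left (step1.trans step2) hγ0) _) le_rfl
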